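/- arXiv:1307.6886 — 4 statements merged into one kernel-verified Lean document; each statement's English description precedes it below -/
import Mathlib

section
/- Let 𝒞 be a category and x an object of 𝒞 such that 𝒞 is strongly connected at x, i.e. for every object y of 𝒞 there exist a morphism x ⟶ y and a morphism y ⟶ x. Let L : 𝒞 ⥤ 𝒟 be a localization functor of 𝒞 with respect to the class of all morphisms (so L sends every morphism of 𝒞 to an isomorphism and is universal with this property). Then the canonical map from endomorphisms of x to automorphisms of L(x) has image generating the whole automorphism group: the subgroup of Aut(L(x)) generated by the set of automorphisms arising as L(f) for endomorphisms f : x ⟶ x in 𝒞 is all of Aut(L(x)). -/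
open CategoryTheory

/-- Proposition 3.2: if `𝒞` is strongly connected at `x` and `L : 𝒞 ⥤ 𝒟` is a localization
of `𝒞` at the class of all morphisms, then the automorphisms of `L(x)` coming from
endomorphisms of `x` in `𝒞` generate the whole group `Aut (L(x))`. -/
theorem strongly_connected_endomorphisms_generate_aut_of_localization
    {C : Type*} {D : Type*} [Category C] [Category D] (x : C)
    (hsc : ∀ y : C, Nonempty (x ⟶ y) ∧ Nonempty (y ⟶ x))
    (L : C ⥤ D) [L.IsLocalization ⊤] :
    Subgroup.closure {a : Aut (L.obj x) | ∃ f : x ⟶ x, a.hom = L.map f} = ⊤ := by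
  have hiso : ∀ {y z : C} (f : y ⟶ z), IsIso (L.map f) := fun f =>
    Localization.inverts L ⊤ f trivial
  set S : Set (Aut (L.obj x)) := {a : Aut (L.obj x) | ∃ f : x ⟶ x, a.hom = L.map f} with hS
  set H := Subgroup.closure S with hH
  -- generic membership lemma: zigzags of length one are in `H`
  have key : ∀ {y : C} (u v : x ⟶ y), ∃ a ∈ H, a.hom = L.map u ≫ inv (L.map v) := by
    intro y u v
    obtain ⟨-, ⟨p⟩⟩ := hsc y
    haveI := hiso (u ≫ p); haveI := hiso (v ≫ p)
    haveI := hiso v; haveI := hiso p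
    let g₁ : Aut (L.obj x) := asIso (L.map (u ≫ p))
    let g₂ : Aut (L.obj x) := asIso (L.map (v ≫ p))
    have hg₁ : g₁ ∈ H := Subgroup.subset_closure ⟨u ≫ p, rfl⟩
    have hg₂ : g₂ ∈ H := Subgroup.subset_closure ⟨v ≫ p, rfl⟩
    refine ⟨g₂⁻¹ * g₁, mul_mem (inv_mem hg₂) hg₁, ?_⟩
    show g₁.hom ≫ g₂.inv = _
    have h2 : g₂.inv = inv (L.map (v ≫ p)) := by simp [g₂]
    rw [h2]
    simp [g₁, IsIso.inv_comp]
  let W : MorphismProperty C := ⊤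
  let E : W.Localization ≌ D := Localization.uniq W.Q L ⊤
  let e : W.Q ⋙ E.functor ≅ L := Localization.compUniqFunctor W.Q L ⊤
  let δ : ∀ d : W.Localization, L.obj x ≅ E.functor.obj d := fun d =>
    haveI := hiso (hsc d.as.obj).1.some
    asIso (L.map (hsc d.as.obj).1.some) ≪≫
      ((e.app d.as.obj).symm : L.obj d.as.obj ≅ E.functor.obj d)
  let P : MorphismProperty W.Localization := fun d d' g =>
    ∃ a ∈ H, a.hom = (δ d).hom ≫ E.functor.map g ≫ (δ d').inv
  haveI : P.IsStableUnderComposition := by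
    constructor
    rintro d d' d'' g g' ⟨a, ha, haeq⟩ ⟨b, hb, hbeq⟩
    refine ⟨b * a, mul_mem hb ha, ?_⟩
    show a.hom ≫ b.hom = _
    rw [haeq, hbeq]
    simp
  have hP₁ : ∀ ⦃y y' : C⦄ (f : y ⟶ y'), P (W.Q.map f) := by
    intro y y' f
    haveI := hiso (hsc y').1.some
    obtain ⟨a, ha, haeq⟩ := key ((hsc y).1.some ≫ f) (hsc y').1.some
    refine ⟨a, ha, ?_⟩
    rw [haeq]
    have hnat : (W.Q ⋙ E.functor).map f ≫ e.hom.app y' = e.hom.app y ≫ L.map f :=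
      e.hom.naturality f
    show L.map ((hsc y).1.some ≫ f) ≫ inv (L.map (hsc y').1.some) =
      (δ (W.Q.obj y)).hom ≫ E.functor.map (W.Q.map f) ≫ (δ (W.Q.obj y')).inv
    simp only [δ, Iso.trans_hom, Iso.trans_inv, asIso_hom, asIso_inv, Iso.symm_hom,
      Iso.symm_inv, Iso.app_hom, Iso.app_inv, Category.assoc, L.map_comp]
    show L.map (hsc y).1.some ≫ L.map f ≫ inv (L.map (hsc y').1.some) =
      (L.map (hsc y).1.some ≫ e.inv.app y) ≫ (W.Q ⋙ E.functor).map f ≫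
        (e.hom.app y' ≫ inv (L.map (hsc y').1.some))
    simp only [Category.assoc]
    show L.map (hsc y).1.some ≫ L.map f ≫ inv (L.map (hsc y').1.some) =
      L.map (hsc y).1.some ≫ e.inv.app y ≫ (W.Q ⋙ E.functor).map f ≫
        e.hom.app y' ≫ inv (L.map (hsc y').1.some)
    rw [← e.inv.naturality_assoc f]
    simp
  have hP₂ : ∀ ⦃d d' : W.Localization⦄ (ε : d ≅ d') (_ : P ε.hom), P ε.inv := by
    rintro d d' ε ⟨a, ha, haeq⟩
    refine ⟨a⁻¹, inv_mem ha, ?_⟩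
    show a.inv = _
    refine Iso.inv_ext ?_
    rw [haeq]
    simp [← Functor.map_comp_assoc]
  have htop := Localization.Construction.morphismProperty_eq_top' P hP₁ hP₂
  rw [eq_top_iff]
  rintro a -
  haveI := hiso (hsc x).1.some
  let c : Aut (L.obj x) := asIso (L.map (hsc x).1.some)
  have hc : c ∈ H := Subgroup.subset_closure ⟨(hsc x).1.some, rfl⟩
  let g : W.Q.obj x ⟶ W.Q.obj x := E.functor.preimage (e.hom.app x ≫ a.hom ≫ e.inv.app x)
  have hg : P g := by rw [htop]; trivial
  obtain ⟨b, hb, hbeq⟩ := hg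
  have hmap : E.functor.map g = e.hom.app x ≫ a.hom ≫ e.inv.app x :=
    E.functor.map_preimage _
  rw [hmap] at hbeq
  have : a = c * b * c⁻¹ := by
    refine Iso.ext ?_
    show a.hom = (c⁻¹).hom ≫ (c * b).hom
    show a.hom = c.inv ≫ b.hom ≫ c.hom
    rw [hbeq]
    show a.hom = inv (L.map (hsc x).1.some) ≫
      ((L.map (hsc x).1.some ≫ e.inv.app x) ≫ (e.hom.app x ≫ a.hom ≫ e.inv.app x) ≫
        (e.hom.app x ≫ inv (L.map (hsc x).1.some))) ≫ L.map (hsc x).1.some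
    simp
    rw [show E.functor.map (W.Q.map (hsc x).1.some)
        = (W.Q ⋙ E.functor).map (hsc x).1.some from rfl,
      ← e.inv.naturality_assoc]
    simp
  rw [this]
  exact mul_mem (mul_mem hc hb) (inv_mem hc)
end

section
/- Let M be the quotient of the additive commutative monoid ℕ × ℕ × (ZMod 2) (componentwise addition) by the additive monoid congruence generated by the relations (g, k, 0) ∼ (0, 2g + k, 1) for all g ∈ ℕ and all k ≥ 1. Then there is a well-defined additive monoid homomorphism φ : M →+ ℤ sending the class of (g, k, ε) to 2g + k, and φ is a group completion of M: for every additive commutative group G and every additive monoid homomorphism f : M →+ G there exists a unique additive group homomorphism h : ℤ →+ G with h ∘ φ = f. In particular the group completion (Grothendieck group) of M is isomorphic to ℤ. -/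
universe u

/-- The relation `(g, k, 0) ∼ (0, 2g + k, 1)` for `k ≥ 1` on `ℕ × ℕ × ZMod 2`. -/
def nOneRel : (ℕ × ℕ × ZMod 2) → (ℕ × ℕ × ZMod 2) → Prop := fun a b =>
  ∃ g k : ℕ, 1 ≤ k ∧ a = (g, k, (0 : ZMod 2)) ∧ b = (0, 2 * g + k, (1 : ZMod 2))

/-- The additive monoid congruence on `ℕ × ℕ × ZMod 2` generated by `nOneRel`. -/
def nOneCon : AddCon (ℕ × ℕ × ZMod 2) := addConGen nOneRel

/-- The monoid `𝒩₁` of the paper: the quotient of `ℕ × ℕ × ZMod 2` by the congruence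
generated by `(g, k, 0) ∼ (0, 2g + k, 1)` for `k ≥ 1`. -/
def NOne : Type := nOneCon.Quotient

noncomputable instance : AddCommMonoid NOne := by
  unfold NOne; infer_instance

lemma zmod2_cases : ∀ ε : ZMod 2, ε = 0 ∨ ε = 1 := by decide

/-- The base homomorphism `(g, k, ε) ↦ 2g + k`. -/
def psiBase : (ℕ × ℕ × ZMod 2) →+ ℤ where
  toFun p := 2 * (p.1 : ℤ) + (p.2.1 : ℤ)
  map_zero' := by simp
  map_add' a b := by
    simp only [Prod.fst_add, Prod.snd_add]
    push_cast
    ring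

lemma psiBase_ker : nOneCon ≤ AddCon.ker psiBase := by
  apply AddCon.addConGen_le.mpr
  rintro a b ⟨g, k, hk, rfl, rfl⟩
  show psiBase _ = psiBase _
  simp only [psiBase, AddMonoidHom.coe_mk, ZeroHom.coe_mk]
  push_cast
  ring

lemma mk_rel (g k : ℕ) (hk : 1 ≤ k) :
    nOneCon.mk' (g, k, (0 : ZMod 2)) = nOneCon.mk' (0, 2 * g + k, (1 : ZMod 2)) := by
  show ((g, k, (0 : ZMod 2)) : nOneCon.Quotient) = ((0, 2 * g + k, (1 : ZMod 2)) : nOneCon.Quotient)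
  rw [AddCon.eq]
  exact AddConGen.Rel.of _ _ ⟨g, k, hk, rfl, rfl⟩

lemma mk_split (g k : ℕ) :
    nOneCon.mk' (g, k, (1 : ZMod 2)) =
      nOneCon.mk' (g, k, (0 : ZMod 2)) + nOneCon.mk' (0, 0, (1 : ZMod 2)) := by
  rw [← map_add]
  congr 1

lemma mk_nsmul (k : ℕ) :
    nOneCon.mk' (0, k, (0 : ZMod 2)) = k • nOneCon.mk' ((0 : ℕ), (1 : ℕ), (0 : ZMod 2)) := by
  rw [← map_nsmul]
  congr 1
  simp [Prod.ext_iff]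

section
variable {G : Type u} [AddCommGroup G] (f : NOne →+ G)

lemma f_crosscap : f (nOneCon.mk' (0, 0, (1 : ZMod 2))) = 0 := by
  have h1 : nOneCon.mk' ((0:ℕ), (1:ℕ), (0 : ZMod 2)) = nOneCon.mk' (0, 1, (1 : ZMod 2)) := by
    simpa using mk_rel 0 1 le_rfl
  have h2 := mk_split 0 1
  rw [← h1] at h2
  have := congrArg f h2
  erw [map_add] at this
  exact (left_eq_add.mp this)

lemma f_val (g k : ℕ) (ε : ZMod 2) :
    f (nOneCon.mk' (g, k, ε)) =
      (2 * g + k) • f (nOneCon.mk' ((0:ℕ), (1:ℕ), (0 : ZMod 2))) := by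
  set x := f (nOneCon.mk' ((0:ℕ), (1:ℕ), (0 : ZMod 2))) with hx
  have key : ∀ g k : ℕ, f (nOneCon.mk' (g, k, (0 : ZMod 2))) = (2 * g + k) • x := by
    intro g k
    have hsum : nOneCon.mk' (g, k, (0 : ZMod 2)) + nOneCon.mk' ((0:ℕ), (1:ℕ), (0 : ZMod 2))
        = nOneCon.mk' (g, k + 1, (0 : ZMod 2)) := by
      rw [← map_add]; congr 1
    have h2 : nOneCon.mk' (g, k + 1, (0 : ZMod 2))
        = nOneCon.mk' (0, 2 * g + k + 1, (0 : ZMod 2)) + nOneCon.mk' (0, 0, (1 : ZMod 2)) := by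
      rw [mk_rel g (k+1) (by omega), mk_split]
      have e : 2 * g + (k + 1) = 2 * g + k + 1 := by omega
      rw [e]
    have hstep : f (nOneCon.mk' (g, k, (0 : ZMod 2))) + x = (2 * g + k + 1) • x := by
      calc f (nOneCon.mk' (g, k, (0 : ZMod 2))) + x
          = f (nOneCon.mk' (g, k + 1, (0 : ZMod 2))) := by exact (map_add f _ _).symm.trans (congrArg f hsum)
        _ = f (nOneCon.mk' (0, 2 * g + k + 1, (0 : ZMod 2))) + f (nOneCon.mk' (0, 0, (1 : ZMod 2))) := by
            rw [h2]; exact map_add f _ _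
        _ = (2 * g + k + 1) • x := by
            rw [f_crosscap, add_zero, mk_nsmul]; exact map_nsmul f _ _
    have h3 : f (nOneCon.mk' (g, k, (0 : ZMod 2))) + x = (2 * g + k) • x + x := by
      rw [hstep, add_nsmul, one_nsmul]
    exact add_right_cancel h3
  rcases zmod2_cases ε with rfl | rfl
  · exact key g k
  · rw [mk_split]; erw [map_add]; rw [f_crosscap, add_zero, key]

end

/-- Theorem 3.3: there is an additive monoid homomorphism `φ : 𝒩₁ →+ ℤ` sending the class
of `(g, k, ε)` to `2g + k`, and `φ` is a group completion of `𝒩₁`; in particular the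
Grothendieck group of `𝒩₁` is `ℤ`. -/
theorem groupCompletion_NOne_eq_int :
    ∃ φ : NOne →+ ℤ,
      (∀ (g k : ℕ) (ε : ZMod 2),
        φ (nOneCon.mk' (g, k, ε)) = 2 * (g : ℤ) + (k : ℤ)) ∧
      ∀ (G : Type u) [AddCommGroup G] (f : NOne →+ G),
        ∃! h : ℤ →+ G, h.comp φ = f := by
  refine ⟨nOneCon.lift psiBase psiBase_ker, fun g k ε => rfl, fun G _ f => ?_⟩
  set x := f (nOneCon.mk' ((0:ℕ), (1:ℕ), (0 : ZMod 2))) with hx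
  refine ⟨zmultiplesHom G x, ?_, ?_⟩
  · ext q
    refine AddCon.induction_on q fun a => ?_
    obtain ⟨g, k, ε⟩ := a
    show (zmultiplesHom G x) ((nOneCon.lift psiBase psiBase_ker) (nOneCon.mk' (g, k, ε)))
        = f (nOneCon.mk' (g, k, ε))
    have hφ : (nOneCon.lift psiBase psiBase_ker) (nOneCon.mk' (g, k, ε))
        = 2 * (g : ℤ) + (k : ℤ) := rfl
    rw [hφ, f_val f g k ε, zmultiplesHom_apply, ← hx, ← natCast_zsmul]
    congr 1
  · intro h hh
    have hφ : (nOneCon.lift psiBase psiBase_ker) (nOneCon.mk' ((0:ℕ), (1:ℕ), (0 : ZMod 2)))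
        = 1 := rfl
    have h1 : h 1 = x := by
      have := DFunLike.congr_fun hh (nOneCon.mk' ((0:ℕ), (1:ℕ), (0 : ZMod 2)))
      rw [← hφ]
      exact this
    ext
    simp [zmultiplesHom_apply, h1]
end

section
/- Let M be the quotient of the additive commutative monoid ℕ × ℕ × (ZMod 2) (componentwise addition) by the additive monoid congruence generated by the relations (g, k, 0) ∼ (0, 2g + k, 1) for all g ∈ ℕ and all k ≥ 1. Then for every additive commutative group G and every additive monoid homomorphism f : M →+ G, one has (i) f(⟦(g, k, 0)⟧) = f(⟦(g, k, 1)⟧) for all g, k ∈ ℕ, and (ii) f(⟦(g, k, 0)⟧) = f(⟦(0, 2g + k, 0)⟧) for all g, k ∈ ℕ. Equivalently, each of these pairs of elements of M becomes equal in the group completion of M. -/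
universe u

lemma nOneCon_rel (g k : ℕ) (hk : 1 ≤ k) :
    nOneCon (g, k, (0 : ZMod 2)) (0, 2 * g + k, (1 : ZMod 2)) :=
  AddConGen.Rel.of _ _ ⟨g, k, hk, rfl, rfl⟩

lemma decomp (g k : ℕ) (x : ZMod 2) :
    ((g, k, x) : ℕ × ℕ × ZMod 2)
      = g • ((1, 0, 0) : ℕ × ℕ × ZMod 2) + k • ((0, 1, 0) : ℕ × ℕ × ZMod 2) + (0, 0, x) := by
  simp [Prod.ext_iff, Prod.smul_def]

/-- Relations (i) and (ii) from the proof of Theorem 3.3: any additive monoid homomorphism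
from `𝒩₁` to an abelian group identifies `⟦(g,k,0)⟧` with `⟦(g,k,1)⟧` and with
`⟦(0,2g+k,0)⟧`; equivalently these become equal in the group completion of `𝒩₁`. -/
theorem NOne_relations_in_group_completion :
    ∀ (G : Type u) [AddCommGroup G] (f : NOne →+ G) (g k : ℕ),
      f (nOneCon.mk' (g, k, (0 : ZMod 2))) = f (nOneCon.mk' (g, k, (1 : ZMod 2))) ∧
      f (nOneCon.mk' (g, k, (0 : ZMod 2))) = f (nOneCon.mk' (0, 2 * g + k, (0 : ZMod 2))) := by
  intro G _ f g k
  set F : (ℕ × ℕ × ZMod 2) →+ G := f.comp nOneCon.mk' with hFdef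
  have hch : ∀ p : ℕ × ℕ × ZMod 2, f (nOneCon.mk' p) = F p := fun p => rfl
  have hrel : ∀ g k : ℕ, 1 ≤ k →
      F (g, k, (0 : ZMod 2)) = F (0, 2 * g + k, (1 : ZMod 2)) := by
    intro g k hk
    show f (nOneCon.mk' _) = f (nOneCon.mk' _)
    exact congrArg f ((nOneCon.eq).mpr (nOneCon_rel g k hk))
  have hF : ∀ (g k : ℕ) (x : ZMod 2),
      F (g, k, x) = g • F (1, 0, 0) + k • F (0, 1, 0) + F (0, 0, x) := by
    intro g k x
    rw [decomp g k x, map_add, map_add, map_nsmul, map_nsmul]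
  have hzero : F (0, 0, (0 : ZMod 2)) = 0 := by
    have : ((0, 0, (0 : ZMod 2)) : ℕ × ℕ × ZMod 2) = 0 := rfl
    rw [this, map_zero]
  have hc0 : F (0, 0, (1 : ZMod 2)) = 0 := by
    have h := hrel 0 1 le_rfl
    rw [hF 0 1 (0 : ZMod 2), hF 0 (2 * 0 + 1) (1 : ZMod 2), hzero] at h
    have h2 : F (0, 1, (0 : ZMod 2)) = F (0, 1, (0 : ZMod 2)) + F (0, 0, (1 : ZMod 2)) := by
      simpa using h
    exact (left_eq_add.mp h2)
  have hab : F (1, 0, (0 : ZMod 2)) = 2 • F (0, 1, (0 : ZMod 2)) := by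
    have h := hrel 1 1 le_rfl
    rw [hF 1 1 (0 : ZMod 2), hF 0 (2 * 1 + 1) (1 : ZMod 2), hzero, hc0] at h
    have h2 : F (1, 0, (0 : ZMod 2)) + F (0, 1, (0 : ZMod 2))
        = 2 • F (0, 1, (0 : ZMod 2)) + F (0, 1, (0 : ZMod 2)) := by
      have h3 : (2 * 1 + 1) • F (0, 1, (0 : ZMod 2))
          = 2 • F (0, 1, (0 : ZMod 2)) + F (0, 1, (0 : ZMod 2)) := by
        rw [show 2 * 1 + 1 = 2 + 1 from rfl, add_nsmul, one_nsmul]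
      simpa [h3] using h
    exact add_right_cancel h2
  refine ⟨?_, ?_⟩
  · rw [hch, hch, hF g k (0 : ZMod 2), hF g k (1 : ZMod 2), hzero, hc0]
  · rw [hch, hch, hF g k (0 : ZMod 2), hF 0 (2 * g + k) (0 : ZMod 2), hzero, hab]
    simp only [zero_smul, zero_add, add_zero, add_nsmul, smul_smul]
    rw [mul_comm g 2, zero_mul, zero_smul, zero_add]
end

section
/- Let M′ be the quotient of the additive commutative monoid ℕ × (ZMod 2) (componentwise addition) by the additive monoid congruence generated by the relations (k, 0) ∼ (k, 1) for all k ≥ 1. Then there is a well-defined additive monoid homomorphism φ : M′ →+ ℤ sending the class of (k, ε) to k, and φ is a group completion of M′: for every additive commutative group G and every additive monoid homomorphism f : M′ →+ G there exists a unique additive group homomorphism h : ℤ →+ G with h ∘ φ = f. -/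
universe u

/-- The relation `(k, 0) ∼ (k, 1)` for `k ≥ 1` on `ℕ × ZMod 2`. -/
def nOneMinusRel : (ℕ × ZMod 2) → (ℕ × ZMod 2) → Prop := fun a b =>
  ∃ k : ℕ, 1 ≤ k ∧ a = (k, (0 : ZMod 2)) ∧ b = (k, (1 : ZMod 2))

/-- The additive monoid congruence on `ℕ × ZMod 2` generated by `nOneMinusRel`. -/
def nOneMinusCon : AddCon (ℕ × ZMod 2) := addConGen nOneMinusRel

/-- The monoid `𝒩₁⁻` of the paper: the quotient of `ℕ × ZMod 2` by the congruence
generated by `(k, 0) ∼ (k, 1)` for `k ≥ 1`. -/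
def NOneMinus : Type := nOneMinusCon.Quotient

noncomputable instance : AddCommMonoid NOneMinus := by
  unfold NOneMinus; infer_instance

/-- The underlying hom `ℕ × ZMod 2 →+ ℤ`, first projection then cast. -/
def projHom : (ℕ × ZMod 2) →+ ℤ :=
  (Nat.castAddMonoidHom ℤ).comp (AddMonoidHom.fst ℕ (ZMod 2))

lemma nOneMinusCon_le_ker : nOneMinusCon ≤ AddCon.ker projHom := by
  apply AddCon.addConGen_le.mpr
  rintro a b ⟨k, _, rfl, rfl⟩
  show projHom _ = projHom _
  simp [projHom]

lemma mk_one_zero_eq : (nOneMinusCon.mk' ((1 : ℕ), (0 : ZMod 2)) : NOneMinus)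
    = nOneMinusCon.mk' ((1 : ℕ), (1 : ZMod 2)) := by
  exact nOneMinusCon.eq.mpr (AddConGen.Rel.of _ _ ⟨1, le_refl 1, rfl, rfl⟩)

lemma mk_decomp (k : ℕ) (ε : ZMod 2) :
    (nOneMinusCon.mk' ((k : ℕ), ε) : NOneMinus)
      = k • nOneMinusCon.mk' ((1 : ℕ), (0 : ZMod 2)) + nOneMinusCon.mk' ((0 : ℕ), ε) := by
  rw [← AddMonoidHom.map_nsmul, ← map_add]
  congr 1
  simp [Prod.ext_iff]

/-- Proposition 3.4 (second half): there is an additive monoid homomorphism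
`φ : 𝒩₁⁻ →+ ℤ` sending the class of `(k, ε)` to `k`, and `φ` is a group completion
of `𝒩₁⁻`. -/
theorem groupCompletion_NOneMinus_eq_int :
    ∃ φ : NOneMinus →+ ℤ,
      (∀ (k : ℕ) (ε : ZMod 2), φ (nOneMinusCon.mk' (k, ε)) = (k : ℤ)) ∧
      ∀ (G : Type u) [AddCommGroup G] (f : NOneMinus →+ G),
        ∃! h : ℤ →+ G, h.comp φ = f := by
  refine ⟨nOneMinusCon.lift projHom nOneMinusCon_le_ker, ?_, ?_⟩
  · intro k ε
    exact nOneMinusCon.lift_mk' nOneMinusCon_le_ker (k, ε)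
  · intro G _ f
    set g := f (nOneMinusCon.mk' ((1 : ℕ), (0 : ZMod 2))) with hg
    have hzero1 : f (nOneMinusCon.mk' ((0 : ℕ), (1 : ZMod 2))) = 0 := by
      have h1 : nOneMinusCon.mk' ((0 : ℕ), (1 : ZMod 2))
          + nOneMinusCon.mk' ((1 : ℕ), (0 : ZMod 2))
          = nOneMinusCon.mk' ((1 : ℕ), (0 : ZMod 2)) := by
        rw [← map_add]
        have : ((0 : ℕ), (1 : ZMod 2)) + ((1 : ℕ), (0 : ZMod 2)) = ((1 : ℕ), (1 : ZMod 2)) := by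
          simp [Prod.ext_iff]
        rw [this, ← mk_one_zero_eq]
      have := congrArg f h1
      erw [map_add] at this
      exact add_right_cancel (by rw [this, zero_add])
    have key : ∀ (k : ℕ) (ε : ZMod 2),
        f (nOneMinusCon.mk' (k, ε)) = (k : ℤ) • g := by
      intro k ε
      rw [mk_decomp k ε]
      erw [map_add, map_nsmul]
      have hε : f (nOneMinusCon.mk' ((0 : ℕ), ε)) = 0 := by
        fin_cases ε
        · exact (congrArg f (AddCon.coe_zero (c := nOneMinusCon))).trans (map_zero f)
        · exact hzero1
      rw [hε, add_zero, natCast_zsmul]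
    refine ⟨zmultiplesHom G g, ?_, ?_⟩
    · ext x
      induction x using AddCon.induction_on with
      | H p =>
        obtain ⟨k, ε⟩ := p
        show (zmultiplesHom G g) (nOneMinusCon.lift projHom nOneMinusCon_le_ker
          (nOneMinusCon.mk' (k, ε))) = f (nOneMinusCon.mk' (k, ε))
        rw [key k ε]
        simp [AddCon.lift_mk', AddCon.lift_coe, projHom, zmultiplesHom]
    · intro h hh
      have h1 : (h.comp (nOneMinusCon.lift projHom nOneMinusCon_le_ker))
          (nOneMinusCon.mk' ((1 : ℕ), (0 : ZMod 2))) = g := by exact (DFunLike.congr_fun hh _).trans hg.symm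
      rw [AddMonoidHom.comp_apply] at h1
      rw [show (nOneMinusCon.lift projHom nOneMinusCon_le_ker)
            (nOneMinusCon.mk' ((1 : ℕ), (0 : ZMod 2))) = projHom ((1 : ℕ), (0 : ZMod 2)) from
          nOneMinusCon.lift_mk' nOneMinusCon_le_ker _] at h1
      have h2 : projHom ((1 : ℕ), (0 : ZMod 2)) = 1 := rfl
      rw [h2] at h1
      ext
      simpa [zmultiplesHom] using h1
end
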